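/- For any integers p, q with 0 ≤ p ≤ q, q ≥ 1, gcd(p,q)=1, and any x ∈ ℤ^d, the normalized d-dimensional Gauss sum G(p/q;x) := q^{-d} ∑_{n ∈ {1,...,q}^d} e^{2πi(|n|²p/q + x·n/q)} satisfies |G(p/q;x)| ≤ (2/q)^{d/2}. -/

import Mathlib

open Finset Complex

private lemma two_torsion_card (Q : ℕ) [NeZero Q] :
    (Finset.univ.filter (fun h : ZMod Q => 2 * h = 0)).card ≤ 2 := by
  classical
  have h1 : (Finset.univ.filter (fun h : ZMod Q => 2 * h = 0)).card ≤
      ({0, Q} : Finset ℕ).card := by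
    apply Finset.card_le_card_of_injOn (fun h => 2 * h.val)
    · intro h hh
      simp only [Finset.mem_coe, Finset.mem_filter] at hh
      have hdvd : Q ∣ 2 * h.val := by
        have : ((2 * h.val : ℕ) : ZMod Q) = 0 := by
          push_cast
          rw [ZMod.natCast_zmod_val]
          exact hh.2
        exact (ZMod.natCast_eq_zero_iff _ _).mp this
      have hlt : 2 * h.val < 2 * Q := by
        have := ZMod.val_lt h; omega
      obtain ⟨k, hk⟩ := hdvd
      have hQ : 0 < Q := Nat.pos_of_ne_zero (NeZero.ne Q)
      have hklt : k < 2 := by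
        have : Q * k < Q * 2 := by omega
        exact Nat.lt_of_mul_lt_mul_left this
      simp only [Finset.mem_coe, Finset.mem_insert, Finset.mem_singleton]
      interval_cases k <;> omega
    · intro a _ b _ hab
      simp only at hab
      exact ZMod.val_injective Q (by omega)
  refine h1.trans ?_
  refine le_trans (Finset.card_insert_le _ _) ?_
  simp

private lemma one_dim_zmod (Q : ℕ) [NeZero Q] (a b : ZMod Q) (ha : IsUnit a) :
    ‖∑ z : ZMod Q, ZMod.stdAddChar (a * z ^ 2 + b * z)‖ ≤
    Real.sqrt (2 * Q) := by
  classical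
  set ψ := (ZMod.stdAddChar : AddChar (ZMod Q) ℂ) with hψ
  have habs : ∀ u : ZMod Q, ‖ψ u‖ = 1 := by
    intro u; simp [hψ, ZMod.stdAddChar_apply, Circle.norm_coe]
  have hconj : ∀ u : ZMod Q, (starRingEnd ℂ) (ψ u) = ψ (-u) := by
    intro u
    rw [AddChar.map_neg_eq_inv, Complex.inv_eq_conj (by simp [habs u])]
  set T := ∑ z : ZMod Q, ψ (a * z ^ 2 + b * z) with hT
  have key : ‖T‖ ^ 2 ≤ 2 * Q := by
    have expand : T * (starRingEnd ℂ) T =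
        ∑ w : ZMod Q, ∑ h : ZMod Q, ψ (a * h ^ 2 + b * h) * ψ (w * (2 * a * h)) := by
      rw [hT, map_sum, Finset.sum_mul_sum, Finset.sum_comm]
      refine Finset.sum_congr rfl fun w _ => ?_
      simp only [hconj]
      refine Fintype.sum_equiv (Equiv.subRight w) _ _ fun z => ?_
      rw [← AddChar.map_add_eq_mul, ← AddChar.map_add_eq_mul]
      congr 1
      simp only [Equiv.subRight_apply]
      ring
    have expand2 : T * (starRingEnd ℂ) T =
        ∑ h : ZMod Q, ψ (a * h ^ 2 + b * h) *
          (if 2 * a * h = 0 then ((Fintype.card (ZMod Q) : ℕ) : ℂ) else 0) := by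
      rw [expand, Finset.sum_comm]
      refine Finset.sum_congr rfl fun h _ => ?_
      rw [← Finset.mul_sum, AddChar.sum_mulShift _ (ZMod.isPrimitive_stdAddChar Q)]
      push_cast
      rfl
    have habsT : ‖T‖ ^ 2 = ‖T * (starRingEnd ℂ) T‖ := by
      rw [norm_mul, Complex.norm_conj, sq]
    rw [habsT, expand2]
    have step1 : ‖∑ h : ZMod Q, ψ (a * h ^ 2 + b * h) *
          (if 2 * a * h = 0 then ((Fintype.card (ZMod Q) : ℕ) : ℂ) else 0)‖
        ≤ ∑ h : ZMod Q, (if 2 * a * h = 0 then (Q : ℝ) else 0) := by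
      refine (norm_sum_le _ _).trans (le_of_eq ?_)
      refine Finset.sum_congr rfl fun h _ => ?_
      rw [norm_mul, habs, one_mul]
      split_ifs <;> simp [ZMod.card]
    refine step1.trans ?_
    have step2 : (∑ h : ZMod Q, (if 2 * a * h = 0 then (Q : ℝ) else 0))
        = ((Finset.univ.filter (fun h : ZMod Q => 2 * a * h = 0)).card : ℝ) * (Q : ℝ) := by
      rw [← Finset.sum_filter, Finset.sum_const, nsmul_eq_mul]
    rw [step2]
    have hfil : (Finset.univ.filter (fun h : ZMod Q => 2 * a * h = 0)) =
        (Finset.univ.filter (fun h : ZMod Q => 2 * h = 0)) := by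
      refine Finset.filter_congr fun h _ => ?_
      constructor
      · intro hh
        have : a * (2 * h) = 0 := by rw [← hh]; ring
        rwa [ha.mul_right_eq_zero] at this
      · intro hh
        have : 2 * a * h = a * (2 * h) := by ring
        rw [this, hh, mul_zero]
    rw [hfil]
    have hcard := two_torsion_card Q
    have hQ0 : (0:ℝ) ≤ (Q : ℝ) := by positivity
    apply mul_le_mul_of_nonneg_right _ hQ0
    exact_mod_cast hcard
  have hmono := Real.sqrt_le_sqrt key
  rwa [Real.sqrt_sq (norm_nonneg T)] at hmono

private lemma one_dim (p q : ℤ) (hp : 0 ≤ p) (hq : 1 ≤ q) (hcop : IsCoprime p q) (x : ℤ) :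
    ‖∑ n ∈ Finset.Icc (1:ℤ) q,
      Complex.exp (2 * Real.pi * Complex.I * (((n:ℂ)^2 * p + x * n) / q))‖ ≤
    Real.sqrt (2 * q) := by
  classical
  set Q := q.toNat with hQdef
  have hQq : (Q : ℤ) = q := Int.toNat_of_nonneg (by omega)
  haveI : NeZero Q := ⟨by omega⟩
  have hsum : (∑ n ∈ Finset.Icc (1:ℤ) q,
      Complex.exp (2 * Real.pi * Complex.I * (((n:ℂ)^2 * p + x * n) / q)))
      = ∑ z : ZMod Q, ZMod.stdAddChar ((p : ZMod Q) * z ^ 2 + (x : ZMod Q) * z) := by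
    refine Finset.sum_nbij' (fun n => ((n : ZMod Q)))
      (fun z => if (z.val : ℤ) = 0 then q else (z.val : ℤ)) ?_ ?_ ?_ ?_ ?_
    · intro n _; exact Finset.mem_univ _
    · intro z _
      have hv : (z.val : ℤ) < q := by rw [← hQq]; exact_mod_cast ZMod.val_lt z
      have hv0 : (0:ℤ) ≤ (z.val : ℤ) := by positivity
      simp only [Finset.mem_Icc]
      split_ifs <;> omega
    · intro n hn
      simp only [Finset.mem_Icc] at hn
      have hv : (((n : ℤ) : ZMod Q).val : ℤ) = n % q := by
        rw [ZMod.val_intCast, hQq]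
      rw [hv]
      split_ifs with h
      · have hdvd : q ∣ n := Int.dvd_of_emod_eq_zero h
        have := Int.le_of_dvd (by omega) hdvd
        omega
      · have hne : n ≠ q := fun hnq => h (by rw [hnq, Int.emod_self])
        exact Int.emod_eq_of_lt (by omega) (by omega)
    · intro z _
      split_ifs with h
      · have hz0 : z = 0 := by
          rw [← ZMod.val_eq_zero]; omega
        rw [hz0, ← hQq]
        push_cast
        exact ZMod.natCast_self Q
      · push_cast
        exact ZMod.natCast_zmod_val z
    · intro n hn
      have harg : ((p * n ^ 2 + x * n : ℤ) : ZMod Q) =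
          (p : ZMod Q) * ((n : ℤ) : ZMod Q) ^ 2 + (x : ZMod Q) * ((n : ℤ) : ZMod Q) := by
        push_cast; ring
      rw [← harg, ZMod.stdAddChar_coe]
      congr 1
      have hQC : ((Q : ℕ) : ℂ) = (q : ℂ) := by exact_mod_cast congrArg Int.cast hQq
      rw [hQC]
      push_cast
      ring
  rw [hsum]
  have hunit : IsUnit ((p : ZMod Q)) := by
    have hg : Int.gcd p q = 1 := Int.isCoprime_iff_gcd_eq_one.mp hcop
    have hco : Nat.Coprime p.toNat Q := by
      have h1 : p.natAbs = p.toNat := by omega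
      have h2 : q.natAbs = Q := by omega
      unfold Int.gcd at hg
      rw [h1, h2] at hg
      exact hg
    have hcast : ((p.toNat : ℕ) : ZMod Q) = (p : ZMod Q) := by
      rw [← Int.toNat_of_nonneg hp]; push_cast; rfl
    rw [← hcast]
    exact (ZMod.isUnit_iff_coprime _ _).mpr hco
  have hb := one_dim_zmod Q (p : ZMod Q) (x : ZMod Q) hunit
  have hQR : ((Q : ℕ) : ℝ) = (q : ℝ) := by exact_mod_cast congrArg Int.cast hQq
  rwa [hQR] at hb

/-- Dimension-free bound for the normalized `d`-dimensional Gauss sum: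
`|G(p/q; x)| ≤ (2/q)^(d/2)` for `0 ≤ p ≤ q`, `q ≥ 1`, `gcd(p,q)=1`. -/
theorem gauss_sum_bound (d : ℕ) (p q : ℤ) (hp : 0 ≤ p) (hpq : p ≤ q) (hq : 1 ≤ q)
    (hcop : IsCoprime p q) (x : Fin d → ℤ) :
    ‖(q : ℂ) ^ (-(d : ℤ)) *
      ∑ n ∈ Fintype.piFinset (fun _ : Fin d => Finset.Icc (1 : ℤ) q),
        Complex.exp (2 * Real.pi * Complex.I *
          (((∑ j, (n j : ℂ) ^ 2) * p + ∑ j, (x j : ℂ) * n j) / q))‖ ≤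
    (2 / (q : ℝ)) ^ ((d : ℝ) / 2) := by
  classical
  have hq0 : (0:ℝ) < (q:ℝ) := by exact_mod_cast hq
  have factor : (∑ n ∈ Fintype.piFinset (fun _ : Fin d => Finset.Icc (1 : ℤ) q),
        Complex.exp (2 * Real.pi * Complex.I *
          (((∑ j, (n j : ℂ) ^ 2) * p + ∑ j, (x j : ℂ) * n j) / q)))
      = ∏ j : Fin d, ∑ n ∈ Finset.Icc (1:ℤ) q,
          Complex.exp (2 * Real.pi * Complex.I * (((n:ℂ)^2 * p + (x j) * n) / q)) := by
    rw [Finset.prod_univ_sum]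
    refine Finset.sum_congr rfl fun n _ => ?_
    rw [← Complex.exp_sum]
    congr 1
    rw [← Finset.mul_sum, ← Finset.sum_div]
    congr 2
    rw [Finset.sum_add_distrib, ← Finset.sum_mul]
  rw [factor, norm_mul, norm_prod, norm_zpow]
  have habsq : ‖(q : ℂ)‖ = (q : ℝ) := by
    rw [Complex.norm_intCast, abs_of_pos (by exact_mod_cast hq)]
  rw [habsq]
  have hbound : ∏ j : Fin d, ‖∑ n ∈ Finset.Icc (1:ℤ) q,
        Complex.exp (2 * Real.pi * Complex.I * (((n:ℂ)^2 * p + (x j) * n) / q))‖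
      ≤ Real.sqrt (2 * q) ^ d := by
    calc _ ≤ ∏ _j : Fin d, Real.sqrt (2 * q) := by
          apply Finset.prod_le_prod
          · intro j _; exact norm_nonneg _
          · intro j _; exact one_dim p q hp hq hcop (x j)
      _ = Real.sqrt (2 * q) ^ d := by
          rw [Finset.prod_const, Finset.card_univ, Fintype.card_fin]
  have hzpos : (0:ℝ) < (q:ℝ) ^ (-(d:ℤ)) := by positivity
  have hmain : (q:ℝ) ^ (-(d:ℤ)) * ∏ j : Fin d, ‖∑ n ∈ Finset.Icc (1:ℤ) q,
        Complex.exp (2 * Real.pi * Complex.I * (((n:ℂ)^2 * p + (x j) * n) / q))‖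
      ≤ (q:ℝ) ^ (-(d:ℤ)) * Real.sqrt (2 * q) ^ d :=
    mul_le_mul_of_nonneg_left hbound hzpos.le
  refine hmain.trans (le_of_eq ?_)
  rw [zpow_neg, zpow_natCast]
  have h1 : Real.sqrt (2 * q) = Real.sqrt 2 * Real.sqrt q :=
    Real.sqrt_mul (by norm_num) _
  have hsq : (0:ℝ) < Real.sqrt (q:ℝ) := Real.sqrt_pos.mpr hq0
  have h2 : ((q:ℝ) ^ d)⁻¹ * Real.sqrt (2 * q) ^ d
      = (Real.sqrt 2 / Real.sqrt q) ^ d := by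
    rw [h1, mul_pow, div_pow]
    rw [show ((q:ℝ))^d = (Real.sqrt (q:ℝ))^d * (Real.sqrt (q:ℝ))^d by
      rw [← mul_pow, Real.mul_self_sqrt hq0.le]]
    field_simp
  rw [h2]
  have h3 : Real.sqrt 2 / Real.sqrt q = Real.sqrt (2 / (q:ℝ)) :=
    (Real.sqrt_div' 2 hq0.le).symm
  rw [h3, Real.sqrt_eq_rpow, ← Real.rpow_natCast ((2/(q:ℝ)) ^ ((1:ℝ)/2)) d,
    ← Real.rpow_mul (by positivity)]
  congr 1
  push_cast
  ring
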